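/- Let m, n, h ∈ ℕ with h ≤ min(m,n). If either (n ≥ 2h and m > 2h) or (n ≤ 2h and m > n), then the EPOSIC channel Φ_{m,n,h} is not entanglement breaking, i.e. its Choi matrix is not separable. In particular, Φ_{m,n,h} is not entanglement breaking whenever m > n; specifically, Φ_{m,h,h} is not entanglement breaking for any 0 ≤ h < m. -/

import Mathlib

open scoped BigOperators Matrix ComplexOrder Kronecker
open Matrix

/-- Binomial coefficient `C(a, b)` with an integer lower argument (zero if `b < 0`),
as a real number. -/
noncomputable def Cb (a : ℕ) (b : ℤ) : ℝ :=
  if 0 ≤ b then (a.choose b.toNat : ℝ) else 0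

/-- The coefficient `β_{i,s,j}` of the EPOSIC channel `Φ_{m,n,h}`. -/
noncomputable def epsBeta (m n h : ℕ) (i s j : ℤ) : ℝ :=
  ((-1 : ℝ) ^ s * Cb h s * Cb (n - h) (j - s) * Cb (m - h) (i - j + s)) /
    Real.sqrt (Cb (m + n - 2 * h) i * Cb m (i - j + h) * Cb n j *
      ∑ k ∈ Finset.range (h + 1),
        (h.choose k : ℝ) ^ 2 / ((m.choose (h - k) : ℝ) * (n.choose k : ℝ)))

/-- The coefficient `ε_i^j = ε_i^j(m,n,h)` of the EPOSIC channel `Φ_{m,n,h}`. -/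
noncomputable def eps (m n h : ℕ) (i j : ℤ) : ℝ :=
  ∑ s ∈ Finset.Icc (max 0 (max (j - i) (j + h - n)))
      (min (h : ℤ) (min j (j + m - i - h))),
    epsBeta m n h i s j

/-- The `j`-th EPOSIC Kraus operator of `Φ_{m,n,h}`: the `(m+1) × (r+1)` matrix
(`r = m + n - 2h`) whose `(i - j + h, i)` entry is `ε_i^j` for
`max{0, j-h} ≤ i ≤ min{r, m-h+j}`, all other entries being `0`. -/
noncomputable def kraus (m n h j : ℕ) : Matrix (Fin (m + 1)) (Fin (m + n - 2 * h + 1)) ℂ :=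
  Matrix.of fun l i =>
    if (l : ℤ) = (i : ℤ) - j + h ∧ max 0 ((j : ℤ) - h) ≤ (i : ℤ) ∧
        (i : ℤ) ≤ min ((m : ℤ) + n - 2 * h) ((m : ℤ) - h + j)
      then ((eps m n h i j : ℝ) : ℂ) else 0

/-- The EPOSIC channel `Φ_{m,n,h}`. -/
noncomputable def eposic (m n h : ℕ)
    (A : Matrix (Fin (m + n - 2 * h + 1)) (Fin (m + n - 2 * h + 1)) ℂ) :
    Matrix (Fin (m + 1)) (Fin (m + 1)) ℂ :=
  ∑ j ∈ Finset.range (n + 1), kraus m n h j * A * (kraus m n h j)ᴴ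

/-- A positive semidefinite matrix indexed by a product system is separable if it is a
finite sum of Kronecker products of positive semidefinite matrices of the two factors. -/
def Separable {d₁ d₂ : ℕ} (ρ : Matrix (Fin d₁ × Fin d₂) (Fin d₁ × Fin d₂) ℂ) : Prop :=
  ∃ (t : ℕ) (σ : Fin t → Matrix (Fin d₁) (Fin d₁) ℂ)
    (τ : Fin t → Matrix (Fin d₂) (Fin d₂) ℂ),
    (∀ s, (σ s).PosSemidef) ∧ (∀ s, (τ s).PosSemidef) ∧ ρ = ∑ s, σ s ⊗ₖ τ s

/-- The Choi matrix `C(Φ) = ∑_{i,j} Φ(E_{ij}) ⊗ E_{ij}` of a linear map between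
matrix spaces, where `E_{ij}` are the standard matrix units. -/
noncomputable def choi {d e : ℕ}
    (Φ : Matrix (Fin d) (Fin d) ℂ → Matrix (Fin e) (Fin e) ℂ) :
    Matrix (Fin e × Fin d) (Fin e × Fin d) ℂ :=
  ∑ i : Fin d, ∑ j : Fin d, Φ (Matrix.single i j 1) ⊗ₖ Matrix.single i j 1

lemma psd_row_zero {k : Type*} [Fintype k] [DecidableEq k] {M : Matrix k k ℂ}
    (hM : M.PosSemidef) {a : k} (ha : M a a = 0) (c : k) : M a c = 0 := by
  obtain ⟨B, rfl⟩ : ∃ B : Matrix k k ℂ, M = Bᴴ * B := by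
    open MatrixOrder in exact CStarAlgebra.nonneg_iff_eq_star_mul_self.mp hM.nonneg
  have key : ∀ x, B x a = 0 := by
    have h1 : (∑ x, ((Complex.normSq (B x a) : ℝ) : ℂ)) = 0 := by
      rw [← ha, Matrix.mul_apply]
      congr 1; ext x
      rw [Matrix.conjTranspose_apply, ← Complex.mul_conj]
      simp [Complex.star_def]; ring
    have h2 : (∑ x, Complex.normSq (B x a)) = 0 := by
      have := h1
      push_cast at this
      exact_mod_cast this
    intro x
    have hx := (Finset.sum_eq_zero_iff_of_nonneg
      (fun i _ => Complex.normSq_nonneg (B i a))).mp h2 x (Finset.mem_univ x)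
    exact Complex.normSq_eq_zero.mp hx
  rw [Matrix.mul_apply]
  apply Finset.sum_eq_zero
  intro x _
  rw [Matrix.conjTranspose_apply, key x, star_zero, zero_mul]

lemma psd_diag_nonneg {k : Type*} [Fintype k] [DecidableEq k] {M : Matrix k k ℂ}
    (hM : M.PosSemidef) (a : k) : 0 ≤ M a a := by
  exact hM.diag_nonneg

lemma sep_key {d₁ d₂ : ℕ} {ρ : Matrix (Fin d₁ × Fin d₂) (Fin d₁ × Fin d₂) ℂ}
    (hρ : Separable ρ) (a c : Fin d₁) (b d : Fin d₂)
    (h0 : ρ (a, d) (a, d) = 0) : ρ (a, b) (c, d) = 0 := by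
  obtain ⟨t, σ, τ, hσ, hτ, rfl⟩ := hρ
  rw [Matrix.sum_apply] at h0 ⊢
  have hterm : ∀ s ∈ Finset.univ (α := Fin t), σ s a a * τ s d d = 0 := by
    apply (Finset.sum_eq_zero_iff_of_nonneg ?_).mp
    · simpa [Matrix.kroneckerMap_apply] using h0
    · intro s _
      exact mul_nonneg (psd_diag_nonneg (hσ s) a) (psd_diag_nonneg (hτ s) d)
  apply Finset.sum_eq_zero
  intro s _
  have := hterm s (Finset.mem_univ s)
  rcases mul_eq_zero.mp this with hz | hz
  · simp [Matrix.kroneckerMap_apply, psd_row_zero (hσ s) hz c]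
  · have h1 : τ s d b = 0 := psd_row_zero (hτ s) hz b
    have h2 : τ s b d = 0 := by
      have h3 : star (τ s b d) = τ s d b := by
        rw [← Matrix.conjTranspose_apply, (hτ s).1]
      have h4 := h3.trans h1
      simpa using congrArg star h4
    simp [Matrix.kroneckerMap_apply, h2]

lemma choi_apply {d e : ℕ} (Φ : Matrix (Fin d) (Fin d) ℂ → Matrix (Fin e) (Fin e) ℂ)
    (p p' : Fin e) (q q' : Fin d) :
    choi Φ (p, q) (p', q') = Φ (Matrix.single q q' 1) p p' := by
  simp only [choi, Matrix.sum_apply, Matrix.kroneckerMap_apply, Matrix.single,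
    Matrix.of_apply, mul_ite, mul_one, mul_zero]
  rw [Finset.sum_comm]
  rw [Finset.sum_eq_single q']
  · rw [Finset.sum_eq_single q]
    · simp
    · intro b _ hb
      simp [hb]
    · simp
  · intro j _ hj; apply Finset.sum_eq_zero; intro i _; simp [hj, And.comm]
  · simp

lemma eposic_std_apply (m n h : ℕ) (b d : Fin (m + n - 2 * h + 1)) (p q : Fin (m + 1)) :
    eposic m n h (Matrix.single b d 1) p q
      = ∑ j ∈ Finset.range (n + 1), kraus m n h j p b * star (kraus m n h j q d) := by
  rw [eposic, Matrix.sum_apply]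
  apply Finset.sum_congr rfl
  intro j _
  rw [Matrix.mul_apply]
  rw [Finset.sum_eq_single d]
  · rw [Matrix.mul_apply, Finset.sum_eq_single b]
    · simp [Matrix.single, Matrix.conjTranspose_apply]
    · intro x _ hx
      simp [Matrix.single, Ne.symm hx]
    · simp
  · intro y _ hy
    rw [Matrix.mul_apply]
    have : ∀ x, (Matrix.single b d (1:ℂ)) x y = 0 := by
      intro x; simp [Matrix.single, Ne.symm hy]
    simp [this]
  · simp

lemma Cb_pos {a : ℕ} {b : ℤ} (hb : 0 ≤ b) (hba : b ≤ a) : 0 < Cb a b := by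
  rw [Cb, if_pos hb]
  exact_mod_cast Nat.choose_pos (by omega : b.toNat ≤ a)

lemma S_pos (m n h : ℕ) (hm : h ≤ m) :
    0 < ∑ k ∈ Finset.range (h + 1),
      (h.choose k : ℝ) ^ 2 / ((m.choose (h - k) : ℝ) * (n.choose k : ℝ)) := by
  apply Finset.sum_pos'
  · intro k _
    positivity
  · refine ⟨0, Finset.mem_range.mpr (Nat.succ_pos h), ?_⟩
    have hc : 0 < (m.choose h : ℝ) := by exact_mod_cast Nat.choose_pos hm
    simp only [Nat.choose_zero_right, Nat.sub_zero, Nat.cast_one, one_pow, mul_one]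
    positivity

lemma eps_eval (m n h : ℕ) (hn : h ≤ n) (hm : h ≤ m) (i : ℕ)
    (hi1 : (n : ℤ) - h ≤ i) (hi2 : (i : ℤ) ≤ (m : ℤ) + n - 2 * h) :
    eps m n h i n = epsBeta m n h i h n := by
  rw [eps]
  have hl : max (0 : ℤ) (max ((n : ℤ) - i) ((n : ℤ) + h - n)) = h := by omega
  have hu : min (h : ℤ) (min (n : ℤ) ((n : ℤ) + m - i - h)) = h := by omega
  rw [hl, hu, Finset.Icc_self, Finset.sum_singleton]

lemma epsBeta_ne_zero (m n h i : ℕ) (hn : h ≤ n) (hm : h ≤ m)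
    (hge : (n : ℤ) - h ≤ i) (hle : (i : ℤ) ≤ (m : ℤ) + n - 2 * h) :
    epsBeta m n h i h n ≠ 0 := by
  rw [epsBeta]
  apply div_ne_zero
  · apply mul_ne_zero
    apply mul_ne_zero
    apply mul_ne_zero
    · exact pow_ne_zero _ (by norm_num)
    · exact ne_of_gt (Cb_pos (by positivity) (by omega))
    · exact ne_of_gt (Cb_pos (by omega) (by omega))
    · exact ne_of_gt (Cb_pos (by omega) (by omega))
  · apply ne_of_gt
    apply Real.sqrt_pos.mpr
    have h1 : 0 < Cb (m + n - 2 * h) i := Cb_pos (by omega) (by omega)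
    have h2 : 0 < Cb m ((i : ℤ) - n + h) := Cb_pos (by omega) (by omega)
    have h3 : 0 < Cb n n := Cb_pos (by omega) (by omega)
    have h4 := S_pos m n h hm
    positivity

lemma main_lemma (m n h : ℕ) (hn : h ≤ n) (hm : h < m) :
    ¬ Separable (choi (eposic m n h)) := by
  intro hsep
  have hr2 : 2 * h ≤ m + n := by omega
  set r := m + n - 2 * h with hr
  have hrr : (r : ℤ) = (m : ℤ) + n - 2 * h := by omega
  let a : Fin (m + 1) := ⟨0, by omega⟩
  let c : Fin (m + 1) := ⟨m - h, by omega⟩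
  let b : Fin (r + 1) := ⟨n - h, by omega⟩
  let d : Fin (r + 1) := ⟨r, by omega⟩
  have hav : ((a : ℕ) : ℤ) = 0 := by simp [a]
  have hcv : ((c : ℕ) : ℤ) = (m : ℤ) - h := by simp [c]; omega
  have hbv : ((b : ℕ) : ℤ) = (n : ℤ) - h := by simp [b]; omega
  have hdv : ((d : ℕ) : ℤ) = (m : ℤ) + n - 2 * h := by simp [d]; omega
  -- the diagonal entry at ((a,d),(a,d)) is zero
  have h0 : choi (eposic m n h) (a, d) (a, d) = 0 := by
    rw [choi_apply, eposic_std_apply]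
    apply Finset.sum_eq_zero
    intro j hj
    have hj' : j ≤ n := Nat.lt_succ_iff.mp (Finset.mem_range.mp hj)
    have hz : kraus m n h j a d = 0 := by
      rw [kraus, Matrix.of_apply, if_neg]
      rintro ⟨h1, -⟩
      rw [hav, hdv] at h1
      have hjn : j ≤ n := Nat.lt_succ_iff.mp (Finset.mem_range.mp hj)
      omega
    rw [hz, zero_mul]
  have key := sep_key hsep a c b d h0
  rw [choi_apply, eposic_std_apply] at key
  rw [Finset.sum_eq_single n] at key
  · -- evaluate the two kraus entries
    have hkb : kraus m n h n a b = ((eps m n h (n - h : ℕ) n : ℝ) : ℂ) := by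
      rw [kraus, Matrix.of_apply, if_pos]
      omega
    have hkd : kraus m n h n c d = ((eps m n h r n : ℝ) : ℂ) := by
      rw [kraus, Matrix.of_apply, if_pos]
      omega
    rw [hkb, hkd] at key
    have e1 : eps m n h (n - h : ℕ) n ≠ 0 := by
      rw [eps_eval m n h hn (le_of_lt hm) _ (by omega) (by omega)]
      exact epsBeta_ne_zero m n h _ hn (le_of_lt hm) (by omega) (by omega)
    have e2 : eps m n h r n ≠ 0 := by
      rw [eps_eval m n h hn (le_of_lt hm) _ (by omega) (by omega)]
      exact epsBeta_ne_zero m n h _ hn (le_of_lt hm) (by omega) (by omega)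
    rcases mul_eq_zero.mp key with hc1 | hc1
    · exact e1 (by exact_mod_cast hc1)
    · apply e2
      have : ((eps m n h r n : ℝ) : ℂ) = 0 := by
        simpa using congrArg star hc1
      exact_mod_cast this
  · intro j hj hjn
    have hz : kraus m n h j a b = 0 := by
      rw [kraus, Matrix.of_apply, if_neg]
      rintro ⟨h1, -⟩
      rw [hav, hbv] at h1
      have : j = n := by omega
      exact hjn this
    rw [hz, zero_mul]
  · intro hmem
    exact absurd (Finset.self_mem_range_succ n) hmem

theorem stmt19 (m n h : ℕ) (hh : h ≤ min m n) :
    ((2 * h ≤ n ∧ 2 * h < m) ∨ (n ≤ 2 * h ∧ n < m) → ¬ Separable (choi (eposic m n h))) ∧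
    (n < m → ¬ Separable (choi (eposic m n h))) := by
  have hn : h ≤ n := le_trans hh (min_le_right m n)
  have hm' : h ≤ m := le_trans hh (min_le_left m n)
  constructor
  · rintro (⟨h1, h2⟩ | ⟨h1, h2⟩) <;> exact main_lemma m n h hn (by omega)
  · intro hnm
    exact main_lemma m n h hn (by omega)
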